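/- Fix q ∈ (0,∞) and ρ ∈ ℝ, set δ = ρ/q. Let Ω ⊂ ℝ be an open interval, Ψ : Ω → (0,∞) with Ψ^{1/q} ∈ C², satisfying (Ψ^{1/q})'' + (ρ/q) Ψ^{1/q} ≤ 0 on Ω. Then for any x ∈ Ω and t ∈ ℝ with [x, x+t] ⊂ Ω (or [x+t, x] ⊂ Ω if t < 0): Ψ(x+t) ≤ Ψ(x) · J_{(log Ψ)'(x), ρ, q}(t). -/

import Mathlib

open scoped Classical
open Topology Filter

noncomputable def sdel (δ t : ℝ) : ℝ :=
  if 0 < δ then Real.sin (Real.sqrt δ * t) / Real.sqrt δ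
  else if δ = 0 then t
  else Real.sinh (Real.sqrt (-δ) * t) / Real.sqrt (-δ)

noncomputable def cdel (δ t : ℝ) : ℝ :=
  if 0 < δ then Real.cos (Real.sqrt δ * t)
  else if δ = 0 then 1
  else Real.cosh (Real.sqrt (-δ) * t)

/-- Truncation `f₊` of `f` between its first nonpositive and first positive roots. -/
noncomputable def truncPos (f : ℝ → ℝ) (t : ℝ) : ℝ :=
  if ∃ s ∈ Set.Ioo (min t 0) (max t 0), f s = 0 then 0 else f t

/-- The model Jacobian `J_{H,ρ,m}` for `m ∈ (0,∞)`. -/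
noncomputable def Jfun (H ρ m : ℝ) (t : ℝ) : ℝ :=
  (truncPos (fun s => cdel (ρ / m) s + (H / m) * sdel (ρ / m) s) t) ^ m

lemma sdel_zero (δ : ℝ) : sdel δ 0 = 0 := by
  unfold sdel; split_ifs <;> simp

lemma cdel_zero (δ : ℝ) : cdel δ 0 = 1 := by
  unfold cdel; split_ifs <;> simp

lemma hasDerivAt_sdel (δ t : ℝ) : HasDerivAt (sdel δ) (cdel δ t) t := by
  rcases lt_trichotomy δ 0 with hδ | hδ | hδ
  · have h1 : (0:ℝ) < Real.sqrt (-δ) := Real.sqrt_pos.2 (by linarith)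
    have : HasDerivAt (fun s => Real.sinh (Real.sqrt (-δ) * s) / Real.sqrt (-δ))
        (Real.cosh (Real.sqrt (-δ) * t)) t := by
      have h2 : HasDerivAt (fun s : ℝ => Real.sqrt (-δ) * s) (Real.sqrt (-δ)) t := by
        simpa using (hasDerivAt_id t).const_mul (Real.sqrt (-δ))
      have h3 := (Real.hasDerivAt_sinh (Real.sqrt (-δ) * t)).comp t h2
      have h4 := h3.div_const (Real.sqrt (-δ))
      simpa [mul_div_assoc, mul_div_cancel_right₀ _ h1.ne'] using h4
    have e1 : sdel δ = fun s => Real.sinh (Real.sqrt (-δ) * s) / Real.sqrt (-δ) := by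
      funext s; simp [sdel, not_lt.2 hδ.le, hδ.ne]
    have e2 : cdel δ t = Real.cosh (Real.sqrt (-δ) * t) := by
      simp [cdel, not_lt.2 hδ.le, hδ.ne]
    rw [e1, e2]; exact this
  · have e1 : sdel δ = fun s => s := by funext s; simp [sdel, hδ]
    have e2 : cdel δ t = 1 := by simp [cdel, hδ]
    rw [e1, e2]; exact hasDerivAt_id t
  · have h1 : (0:ℝ) < Real.sqrt δ := Real.sqrt_pos.2 hδ
    have : HasDerivAt (fun s => Real.sin (Real.sqrt δ * s) / Real.sqrt δ)
        (Real.cos (Real.sqrt δ * t)) t := by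
      have h2 : HasDerivAt (fun s : ℝ => Real.sqrt δ * s) (Real.sqrt δ) t := by
        simpa using (hasDerivAt_id t).const_mul (Real.sqrt δ)
      have h3 := (Real.hasDerivAt_sin (Real.sqrt δ * t)).comp t h2
      have h4 := h3.div_const (Real.sqrt δ)
      simpa [mul_div_assoc, mul_div_cancel_right₀ _ h1.ne'] using h4
    have e1 : sdel δ = fun s => Real.sin (Real.sqrt δ * s) / Real.sqrt δ := by
      funext s; simp [sdel, hδ]
    have e2 : cdel δ t = Real.cos (Real.sqrt δ * t) := by simp [cdel, hδ]
    rw [e1, e2]; exact this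

lemma hasDerivAt_cdel (δ t : ℝ) : HasDerivAt (cdel δ) (-δ * sdel δ t) t := by
  rcases lt_trichotomy δ 0 with hδ | hδ | hδ
  · have h1 : (0:ℝ) < Real.sqrt (-δ) := Real.sqrt_pos.2 (by linarith)
    have hsq : Real.sqrt (-δ) * Real.sqrt (-δ) = -δ := Real.mul_self_sqrt (by linarith)
    have h2 : HasDerivAt (fun s : ℝ => Real.sqrt (-δ) * s) (Real.sqrt (-δ)) t := by
      simpa using (hasDerivAt_id t).const_mul (Real.sqrt (-δ))
    have h3 := (Real.hasDerivAt_cosh (Real.sqrt (-δ) * t)).comp t h2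
    have e1 : cdel δ = fun s => Real.cosh (Real.sqrt (-δ) * s) := by
      funext s; simp [cdel, not_lt.2 hδ.le, hδ.ne]
    have e2 : sdel δ t = Real.sinh (Real.sqrt (-δ) * t) / Real.sqrt (-δ) := by
      simp [sdel, not_lt.2 hδ.le, hδ.ne]
    rw [e1, e2]
    have : Real.sinh (Real.sqrt (-δ) * t) * Real.sqrt (-δ)
        = -δ * (Real.sinh (Real.sqrt (-δ) * t) / Real.sqrt (-δ)) := by
      rw [mul_div_assoc', eq_div_iff h1.ne', mul_assoc, hsq]; ring
    rw [← this]; exact h3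
  · have e1 : cdel δ = fun _ => (1:ℝ) := by funext s; simp [cdel, hδ]
    rw [e1, hδ]; simpa using hasDerivAt_const t (1:ℝ)
  · have h1 : (0:ℝ) < Real.sqrt δ := Real.sqrt_pos.2 hδ
    have hsq : Real.sqrt δ * Real.sqrt δ = δ := Real.mul_self_sqrt hδ.le
    have h2 : HasDerivAt (fun s : ℝ => Real.sqrt δ * s) (Real.sqrt δ) t := by
      simpa using (hasDerivAt_id t).const_mul (Real.sqrt δ)
    have h3 := (Real.hasDerivAt_cos (Real.sqrt δ * t)).comp t h2
    have e1 : cdel δ = fun s => Real.cos (Real.sqrt δ * s) := by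
      funext s; simp [cdel, hδ]
    have e2 : sdel δ t = Real.sin (Real.sqrt δ * t) / Real.sqrt δ := by simp [sdel, hδ]
    rw [e1, e2]
    have : -Real.sin (Real.sqrt δ * t) * Real.sqrt δ
        = -δ * (Real.sin (Real.sqrt δ * t) / Real.sqrt δ) := by
      rw [mul_div_assoc', eq_div_iff h1.ne', mul_assoc, hsq]; ring
    rw [← this]; exact h3

/-- Core 1-D Sturm comparison on `[0, T]`. -/
lemma sturm_core (δ T : ℝ) (hT : 0 ≤ T) (O : Set ℝ) (hO : IsOpen O)
    (hsub : Set.Icc 0 T ⊆ O)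
    (g g' g'' : ℝ → ℝ)
    (hg1 : ∀ s ∈ O, HasDerivAt g (g' s) s)
    (hg2 : ∀ s ∈ O, HasDerivAt g' (g'' s) s)
    (hineq : ∀ s ∈ O, g'' s + δ * g s ≤ 0)
    (hgpos : ∀ s ∈ Set.Icc 0 T, 0 < g s)
    (h h' : ℝ → ℝ)
    (hh1 : ∀ s, HasDerivAt h (h' s) s)
    (hh2 : ∀ s, HasDerivAt h' (-δ * h s) s)
    (hh0 : h 0 = 1)
    (hh'0 : h' 0 = g' 0 / g 0) :
    ∀ s ∈ Set.Icc 0 T, 0 < h s ∧ g s ≤ g 0 * h s := by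
  have hg00 : (0:ℝ) < g 0 := hgpos 0 ⟨le_refl 0, hT⟩
  set W : ℝ → ℝ := fun s => g' s * h s - g s * h' s with hW
  have hW0 : W 0 = 0 := by
    simp only [hW, hh0, hh'0, mul_one]
    field_simp
    ring
  have hWd : ∀ s ∈ O, HasDerivAt W ((g'' s + δ * g s) * h s) s := by
    intro s hs
    have := ((hg2 s hs).mul (hh1 s)).sub ((hg1 s hs).mul (hh2 s))
    exact this.congr_deriv (by ring)
  -- Step A: W ≤ 0 on [0,s₁] provided h ≥ 0 there
  have stepA : ∀ s₁, s₁ ≤ T → (∀ r ∈ Set.Icc 0 s₁, 0 ≤ h r) →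
      ∀ s ∈ Set.Icc 0 s₁, W s ≤ 0 := by
    intro s₁ hs₁T hhnn s hs
    have hsubO : Set.Icc (0:ℝ) s₁ ⊆ O := fun r hr =>
      hsub ⟨hr.1, hr.2.trans hs₁T⟩
    have hanti : AntitoneOn W (Set.Icc 0 s₁) := by
      apply antitoneOn_of_deriv_nonpos (convex_Icc 0 s₁)
      · intro r hr
        exact ((hWd r (hsubO hr)).continuousAt).continuousWithinAt
      · intro r hr
        rw [interior_Icc] at hr
        exact (hWd r (hsubO ⟨hr.1.le, hr.2.le⟩)).differentiableAt.differentiableWithinAt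
      · intro r hr
        rw [interior_Icc] at hr
        have hrO := hsubO ⟨hr.1.le, hr.2.le⟩
        rw [(hWd r hrO).deriv]
        exact mul_nonpos_of_nonpos_of_nonneg (hineq r hrO) (hhnn r ⟨hr.1.le, hr.2.le⟩)
    have := hanti ⟨le_refl 0, hs.1.trans hs.2 |>.trans (le_refl s₁) |>.trans (le_refl _)⟩ hs hs.1
    -- W s ≤ W 0 = 0
    calc W s ≤ W 0 := this
    _ = 0 := hW0
  -- Step B: if h > 0 on [0,s₁] then g ≤ g 0 * h there
  have stepB : ∀ s₁, s₁ ≤ T → (∀ r ∈ Set.Icc 0 s₁, 0 < h r) →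
      ∀ s ∈ Set.Icc 0 s₁, g s ≤ g 0 * h s := by
    intro s₁ hs₁T hhpos s hs
    have hsubO : Set.Icc (0:ℝ) s₁ ⊆ O := fun r hr => hsub ⟨hr.1, hr.2.trans hs₁T⟩
    have hφd : ∀ r ∈ Set.Icc (0:ℝ) s₁,
        HasDerivAt (fun y => g y / h y) (W r / (h r)^2) r := by
      intro r hr
      have := (hg1 r (hsubO hr)).div (hh1 r) (hhpos r hr).ne'
      exact this
    have hanti : AntitoneOn (fun y => g y / h y) (Set.Icc 0 s₁) := by
      apply antitoneOn_of_deriv_nonpos (convex_Icc 0 s₁)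
      · intro r hr
        exact ((hφd r hr).continuousAt).continuousWithinAt
      · intro r hr
        rw [interior_Icc] at hr
        exact (hφd r ⟨hr.1.le, hr.2.le⟩).differentiableAt.differentiableWithinAt
      · intro r hr
        rw [interior_Icc] at hr
        have hr' : r ∈ Set.Icc (0:ℝ) s₁ := ⟨hr.1.le, hr.2.le⟩
        rw [(hφd r hr').deriv]
        exact div_nonpos_of_nonpos_of_nonneg
          (stepA s₁ hs₁T (fun y hy => (hhpos y hy).le) r hr') (sq_nonneg _)
    have h0mem : (0:ℝ) ∈ Set.Icc (0:ℝ) s₁ := ⟨le_refl 0, hs.1.trans hs.2⟩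
    have := hanti h0mem hs hs.1
    simp only [hh0, div_one] at this
    calc g s = (g s / h s) * h s := (div_mul_cancel₀ _ (hhpos s hs).ne').symm
    _ ≤ g 0 * h s := by
        apply mul_le_mul_of_nonneg_right this (hhpos s hs).le
  -- first-root analysis
  set A : Set ℝ := {s | s ∈ Set.Icc 0 T ∧ ∀ r ∈ Set.Icc 0 s, 0 < h r} with hA
  have h0A : (0:ℝ) ∈ A := by
    refine ⟨⟨le_refl 0, hT⟩, ?_⟩
    intro r hr
    have : r = 0 := le_antisymm hr.2 hr.1
    rw [this, hh0]; norm_num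
  have hAne : A.Nonempty := ⟨0, h0A⟩
  have hAbdd : BddAbove A := ⟨T, fun s hs => hs.1.2⟩
  set b := sSup A with hb
  have hb0 : 0 ≤ b := le_csSup hAbdd h0A
  have hbT : b ≤ T := csSup_le hAne (fun s hs => hs.1.2)
  have hbIcc : b ∈ Set.Icc 0 T := ⟨hb0, hbT⟩
  have hC1 : ∀ r, 0 ≤ r → r < b → 0 < h r := by
    intro r hr0 hrb
    obtain ⟨s, hsA, hrs⟩ := exists_lt_of_lt_csSup hAne hrb
    exact hsA.2 r ⟨hr0, hrs.le⟩
  have hC2 : ∀ s, 0 ≤ s → s < b → g s ≤ g 0 * h s := by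
    intro s hs0 hsb
    exact stepB s (hsb.le.trans hbT) (fun r hr => hC1 r hr.1 (lt_of_le_of_lt hr.2 hsb))
      s ⟨hs0, le_refl s⟩
  have hhb : 0 < h b := by
    by_contra hcon
    push_neg at hcon
    have hbpos : 0 < b := by
      rcases eq_or_lt_of_le hb0 with heq | hlt
      · exfalso; rw [← heq, hh0] at hcon; linarith
      · exact hlt
    -- g b ≤ g 0 * h b by continuity
    have hgb : g b ≤ g 0 * h b := by
      have hne : (𝓝[Set.Ico (0:ℝ) b] b).NeBot := by
        apply mem_closure_iff_nhdsWithin_neBot.1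
        rw [closure_Ico hbpos.ne]
        exact ⟨hb0, le_refl b⟩
      have hgc : Filter.Tendsto g (𝓝[Set.Ico (0:ℝ) b] b) (𝓝 (g b)) :=
        ((hg1 b (hsub hbIcc)).continuousAt.tendsto).mono_left nhdsWithin_le_nhds
      have hhc : Filter.Tendsto (fun s => g 0 * h s) (𝓝[Set.Ico (0:ℝ) b] b)
          (𝓝 (g 0 * h b)) :=
        ((continuousAt_const.mul (hh1 b).continuousAt).tendsto).mono_left nhdsWithin_le_nhds
      refine le_of_tendsto_of_tendsto hgc hhc ?_
      filter_upwards [self_mem_nhdsWithin] with r hr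
      exact hC2 r hr.1 hr.2
    have : g b ≤ 0 := hgb.trans (mul_nonpos_of_nonneg_of_nonpos hg00.le hcon)
    exact absurd (hgpos b hbIcc) (not_lt.2 this)
  have hhIcc : ∀ r ∈ Set.Icc 0 b, 0 < h r := by
    intro r hr
    rcases eq_or_lt_of_le hr.2 with heq | hlt
    · rw [heq]; exact hhb
    · exact hC1 r hr.1 hlt
  have hbeq : b = T := by
    by_contra hne
    have hbT' : b < T := lt_of_le_of_ne hbT hne
    have hev : h ⁻¹' Set.Ioi 0 ∈ 𝓝 b :=
      (hh1 b).continuousAt.preimage_mem_nhds (Ioi_mem_nhds hhb)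
    obtain ⟨ε, hε, hball⟩ := Metric.mem_nhds_iff.1 hev
    set b' := min (b + ε/2) T with hb'
    have hbb' : b < b' := lt_min (by linarith) hbT'
    have hb'A : b' ∈ A := by
      refine ⟨⟨hb0.trans hbb'.le, min_le_right _ _⟩, ?_⟩
      intro r hr
      rcases le_or_gt r b with hrb | hrb
      · exact hhIcc r ⟨hr.1, hrb⟩
      · refine hball ?_
        rw [Metric.mem_ball, Real.dist_eq, abs_lt]
        have h1 : r ≤ b + ε/2 := hr.2.trans (min_le_left _ _)
        constructor <;> [skip; skip] <;> linarith
    exact absurd (le_csSup hAbdd hb'A) (not_le.2 hbb')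
  intro s hs
  rw [← hbeq] at hs
  exact ⟨hhIcc s hs, stepB b hbT hhIcc s hs⟩

theorem stmt6 (q ρ : ℝ) (hq : 0 < q) (Ω : Set ℝ) (hΩ : IsOpen Ω)
    (Ψ : ℝ → ℝ) (hΨ : ∀ x ∈ Ω, 0 < Ψ x)
    (hC2 : ContDiffOn ℝ 2 (fun x => Ψ x ^ (1 / q)) Ω)
    (hODE : ∀ x ∈ Ω, deriv (deriv (fun y => Ψ y ^ (1 / q))) x + (ρ / q) * Ψ x ^ (1 / q) ≤ 0)
    (x t : ℝ) (hseg : Set.uIcc x (x + t) ⊆ Ω) :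
    Ψ (x + t) ≤ Ψ x * Jfun (deriv (fun y => Real.log (Ψ y)) x) ρ q t := by
  have hq0 : q ≠ 0 := hq.ne'
  set u : ℝ → ℝ := fun y => Ψ y ^ (1 / q) with hu
  have hupos : ∀ y ∈ Ω, 0 < u y := fun y hy => Real.rpow_pos_of_pos (hΨ y hy) _
  have hΨeq : ∀ y ∈ Ω, Ψ y = u y ^ q := by
    intro y hy
    simp only [hu, one_div]
    exact (Real.rpow_inv_rpow (hΨ y hy).le hq0).symm
  have hxΩ : x ∈ Ω := hseg Set.left_mem_uIcc
  have hxtΩ : x + t ∈ Ω := hseg Set.right_mem_uIcc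
  have hdiff1 : DifferentiableOn ℝ u Ω := hC2.differentiableOn (by norm_num)
  have hu1 : ∀ y ∈ Ω, HasDerivAt u (deriv u y) y := fun y hy =>
    (hdiff1.differentiableAt (hΩ.mem_nhds hy)).hasDerivAt
  have hC1' : ContDiffOn ℝ 1 (deriv u) Ω := hC2.deriv_of_isOpen hΩ (by norm_num)
  have hdiff2 : DifferentiableOn ℝ (deriv u) Ω := hC1'.differentiableOn (by norm_num)
  have hu2 : ∀ y ∈ Ω, HasDerivAt (deriv u) (deriv (deriv u) y) y := fun y hy =>
    (hdiff2.differentiableAt (hΩ.mem_nhds hy)).hasDerivAt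
  set δ : ℝ := ρ / q with hδ
  set c : ℝ := deriv u x / u x with hc
  have hH : deriv (fun y => Real.log (Ψ y)) x = q * c := by
    have hev : (fun y => Real.log (Ψ y)) =ᶠ[nhds x] (fun y => q * Real.log (u y)) := by
      filter_upwards [hΩ.mem_nhds hxΩ] with y hy
      simp only [hu, Real.log_rpow (hΨ y hy)]
      field_simp
    rw [hev.deriv_eq]
    have : HasDerivAt (fun y => q * Real.log (u y)) (q * (deriv u x / u x)) x := by
      have := ((hu1 x hxΩ).log (hupos x hxΩ).ne').const_mul q
      simpa [div_eq_mul_inv] using this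
    rw [this.deriv]
  set h : ℝ → ℝ := fun s => cdel δ s + c * sdel δ s with hhdef
  set h' : ℝ → ℝ := fun s => -δ * sdel δ s + c * cdel δ s with hh'def
  have hh1 : ∀ s, HasDerivAt h (h' s) s := fun s =>
    (hasDerivAt_cdel δ s).add ((hasDerivAt_sdel δ s).const_mul c)
  have hh2 : ∀ s, HasDerivAt h' (-δ * h s) s := by
    intro s
    have := ((hasDerivAt_sdel δ s).const_mul (-δ)).add ((hasDerivAt_cdel δ s).const_mul c)
    exact this.congr_deriv (by simp only [hhdef]; ring)
  have hh0 : h 0 = 1 := by simp [hhdef, sdel_zero, cdel_zero]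
  have hh'0 : h' 0 = c := by simp [hh'def, sdel_zero, cdel_zero]
  -- key facts via the core lemma
  have key : (0 < h t ∧ u (x + t) ≤ u x * h t) ∧
      ∀ r ∈ Set.Ioo (min t 0) (max t 0), 0 < h r := by
    rcases le_or_gt 0 t with ht | ht
    · -- t ≥ 0
      have hIcc : Set.uIcc x (x + t) = Set.Icc x (x + t) :=
        Set.uIcc_of_le (by linarith)
      set O : Set ℝ := (fun s => x + s) ⁻¹' Ω with hO
      have hOopen : IsOpen O := hΩ.preimage (continuous_const.add continuous_id)
      have hsubO : Set.Icc 0 t ⊆ O := by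
        intro s hs
        simp only [hO, Set.mem_preimage]
        apply hseg
        rw [hIcc, Set.mem_Icc]
        exact ⟨by linarith [hs.1], by linarith [hs.2]⟩
      have hg1 : ∀ s ∈ O, HasDerivAt (fun s => u (x + s)) (deriv u (x + s)) s := by
        intro s hs
        have := (hu1 (x + s) hs).comp s ((hasDerivAt_id s).const_add x)
        simp only [Function.comp_def, mul_one] at this
        exact this
      have hg2 : ∀ s ∈ O, HasDerivAt (fun s => deriv u (x + s)) (deriv (deriv u) (x + s)) s := by
        intro s hs
        have := (hu2 (x + s) hs).comp s ((hasDerivAt_id s).const_add x)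
        simp only [Function.comp_def, mul_one] at this
        exact this
      have hcore := sturm_core δ t ht O hOopen hsubO
        (fun s => u (x + s)) (fun s => deriv u (x + s)) (fun s => deriv (deriv u) (x + s))
        hg1 hg2 (fun s hs => hODE (x + s) hs)
        (fun s hs => hupos (x + s) (hsubO hs))
        h h' hh1 hh2 hh0
        (by rw [hh'0]; simp [hc])
      constructor
      · have := hcore t ⟨ht, le_refl t⟩
        exact ⟨this.1, by simpa using this.2⟩
      · intro r hr
        rw [min_eq_right ht, max_eq_left ht] at hr
        exact (hcore r ⟨hr.1.le, hr.2.le⟩).1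
    · -- t < 0
      have hIcc : Set.uIcc x (x + t) = Set.Icc (x + t) x :=
        Set.uIcc_of_ge (by linarith)
      set O : Set ℝ := (fun s => x - s) ⁻¹' Ω with hO
      have hOopen : IsOpen O := hΩ.preimage (continuous_const.sub continuous_id)
      have hsubO : Set.Icc 0 (-t) ⊆ O := by
        intro s hs
        simp only [hO, Set.mem_preimage]
        apply hseg
        rw [hIcc, Set.mem_Icc]
        exact ⟨by linarith [hs.2], by linarith [hs.1]⟩
      have hsd : ∀ s : ℝ, HasDerivAt (fun s : ℝ => x - s) (-1 : ℝ) s := by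
        intro s
        exact (hasDerivAt_id' s).const_sub x
      have hg1 : ∀ s ∈ O, HasDerivAt (fun s => u (x - s)) (-(deriv u (x - s))) s := by
        intro s hs
        have := (hu1 (x - s) hs).comp s (hsd s)
        exact this.congr_deriv (by ring)
      have hg2 : ∀ s ∈ O, HasDerivAt (fun s => -(deriv u (x - s)))
          (deriv (deriv u) (x - s)) s := by
        intro s hs
        have := ((hu2 (x - s) hs).comp s (hsd s)).neg
        exact this.congr_deriv (by ring)
      have hht1 : ∀ s : ℝ, HasDerivAt (fun s => h (-s)) (-(h' (-s))) s := by
        intro s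
        have := (hh1 (-s)).comp s (hasDerivAt_neg s)
        exact this.congr_deriv (by ring)
      have hht2 : ∀ s : ℝ, HasDerivAt (fun s => -(h' (-s))) (-δ * h (-s)) s := by
        intro s
        have := ((hh2 (-s)).comp s (hasDerivAt_neg s)).neg
        exact this.congr_deriv (by ring)
      have hcore := sturm_core δ (-t) (by linarith) O hOopen hsubO
        (fun s => u (x - s)) (fun s => -(deriv u (x - s))) (fun s => deriv (deriv u) (x - s))
        hg1 hg2 (fun s hs => hODE (x - s) hs)
        (fun s hs => hupos (x - s) (hsubO hs))
        (fun s => h (-s)) (fun s => -(h' (-s))) hht1 hht2 (by simp [hh0])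
        (by simp [hh'0, hc, neg_div])
      constructor
      · have := hcore (-t) ⟨by linarith, le_refl _⟩
        refine ⟨by simpa using this.1, ?_⟩
        have h2 := this.2
        simp only [neg_neg, sub_neg_eq_add, sub_zero] at h2
        exact h2
      · intro r hr
        rw [min_eq_left ht.le, max_eq_right ht.le] at hr
        have := (hcore (-r) ⟨by linarith [hr.2], by linarith [hr.1]⟩).1
        simpa using this
  obtain ⟨⟨hht, hkey⟩, hroots⟩ := key
  have hcfun : (fun s => cdel (ρ / q) s +
      (deriv (fun y => Real.log (Ψ y)) x / q) * sdel (ρ / q) s) = h := by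
    funext s
    rw [hH]
    simp only [hhdef, hδ]
    rw [mul_comm q c, mul_div_assoc, div_self hq0, mul_one]
  have htrunc : truncPos h t = h t := by
    rw [truncPos, if_neg]
    rintro ⟨s, hsmem, hs0⟩
    exact absurd hs0 (hroots s hsmem).ne'
  have hJ : Jfun (deriv (fun y => Real.log (Ψ y)) x) ρ q t = h t ^ q := by
    rw [Jfun, hcfun, htrunc]
  rw [hJ, hΨeq (x + t) hxtΩ, hΨeq x hxΩ]
  calc u (x + t) ^ q ≤ (u x * h t) ^ q :=
        Real.rpow_le_rpow (hupos (x + t) hxtΩ).le hkey hq.le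
  _ = u x ^ q * h t ^ q := Real.mul_rpow (hupos x hxΩ).le hht.le
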